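/- arXiv:2012.12166 — 11 statements merged into one kernel-verified Lean document; each statement's English description precedes it below -/
import Mathlib

section
/- For every (g₁, g₂) ∈ SL(2,ℂ) × SL(2,ℂ), the linear action Q ↦ g₁ Q g₂⁻¹ on M₂(ℂ) ≅ ℂ⁴ preserves the determinant, i.e. the complex quadratic form u² + v² + w² + z² under the biquaternion identification; moreover g₁ Q g₂⁻¹ = Q holds for all Q ∈ M₂(ℂ) if and only if (g₁, g₂) = (1,1) or (g₁, g₂) = (-1,-1). Consequently this action defines a group homomorphism from SL(2,ℂ) × SL(2,ℂ) to the orthogonal group of the standard complex quadratic form on ℂ⁴ whose kernel is {(1,1), (-1,-1)}. -/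
open Matrix

/-- The biquaternion identification of `ℂ⁴` with `M₂(ℂ)`,
sending `(u,v,w,z)` to `[[u+iv, w+iz],[-w+iz, u-iv]]`. -/
noncomputable def biqOfVec (p : Fin 4 → ℂ) : Matrix (Fin 2) (Fin 2) ℂ :=
  !![p 0 + Complex.I * p 1, p 2 + Complex.I * p 3;
     -p 2 + Complex.I * p 3, p 0 - Complex.I * p 1]

/-- The standard complex quadratic form `u² + v² + w² + z²` on `ℂ⁴`. -/
def stdQuadForm (p : Fin 4 → ℂ) : ℂ := p 0 ^ 2 + p 1 ^ 2 + p 2 ^ 2 + p 3 ^ 2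

/-- The orthogonal group of the standard complex quadratic form on `ℂ⁴`, realised as the
subgroup of linear automorphisms of `ℂ⁴` preserving `stdQuadForm`. -/
noncomputable def stdOrthogonalGroup : Subgroup ((Fin 4 → ℂ) ≃ₗ[ℂ] (Fin 4 → ℂ)) where
  carrier := {A | ∀ p, stdQuadForm (A p) = stdQuadForm p}
  mul_mem' := by
    intro A B hA hB p
    have : (A * B) p = A (B p) := rfl
    rw [this, hA, hB]
  one_mem' := by intro p; rfl
  inv_mem' := by
    intro A hA p
    have h := hA (A⁻¹ p)
    have h2 : A (A⁻¹ p) = p := A.apply_symm_apply p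
    rw [h2] at h
    exact h.symm

lemma biq_det (p : Fin 4 → ℂ) : (biqOfVec p).det = stdQuadForm p := by
  simp [biqOfVec, Matrix.det_fin_two_of, stdQuadForm]
  ring_nf
  simp [Complex.I_sq]
  ring

noncomputable def vecOfBiq (Q : Matrix (Fin 2) (Fin 2) ℂ) : Fin 4 → ℂ :=
  ![(Q 0 0 + Q 1 1)/2, (Q 0 0 - Q 1 1) * (-Complex.I)/2,
    (Q 0 1 - Q 1 0)/2, (Q 0 1 + Q 1 0) * (-Complex.I)/2]

noncomputable def biqEquiv : (Fin 4 → ℂ) ≃ₗ[ℂ] Matrix (Fin 2) (Fin 2) ℂ where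
  toFun := biqOfVec
  invFun := vecOfBiq
  map_add' p q := by
    ext i j
    fin_cases i <;> fin_cases j <;> simp [biqOfVec] <;> ring
  map_smul' c p := by
    ext i j
    fin_cases i <;> fin_cases j <;> simp [biqOfVec] <;> ring
  left_inv p := by
    funext i
    fin_cases i <;>
      simp [biqOfVec, vecOfBiq] <;> ring_nf <;> simp [Complex.I_sq] <;> ring_nf
  right_inv Q := by
    ext i j
    fin_cases i <;> fin_cases j <;>
      simp [biqOfVec, vecOfBiq] <;> ring_nf <;> simp [Complex.I_sq] <;> ring_nf

abbrev SL2 := Matrix.SpecialLinearGroup (Fin 2) ℂ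

lemma coe_inv_mul (g : SL2) :
    ((g⁻¹ : SL2) : Matrix (Fin 2) (Fin 2) ℂ) * (g : Matrix (Fin 2) (Fin 2) ℂ) = 1 := by
  rw [← Matrix.SpecialLinearGroup.coe_mul, inv_mul_cancel]; rfl

lemma coe_mul_inv (g : SL2) :
    (g : Matrix (Fin 2) (Fin 2) ℂ) * ((g⁻¹ : SL2) : Matrix (Fin 2) (Fin 2) ℂ) = 1 := by
  rw [← Matrix.SpecialLinearGroup.coe_mul, mul_inv_cancel]; rfl

noncomputable def conjAction (g : SL2 × SL2) :
    Matrix (Fin 2) (Fin 2) ℂ ≃ₗ[ℂ] Matrix (Fin 2) (Fin 2) ℂ where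
  toFun Q := (g.1 : Matrix (Fin 2) (Fin 2) ℂ) * Q * ((g.2⁻¹ : SL2) : Matrix (Fin 2) (Fin 2) ℂ)
  invFun Q := ((g.1⁻¹ : SL2) : Matrix (Fin 2) (Fin 2) ℂ) * Q * (g.2 : Matrix (Fin 2) (Fin 2) ℂ)
  map_add' p q := by noncomm_ring
  map_smul' c p := by simp [Matrix.mul_smul, Matrix.smul_mul]
  left_inv Q := by
    simp only [← mul_assoc]
    rw [coe_inv_mul g.1]
    rw [mul_assoc, coe_inv_mul g.2]
    simp
  right_inv Q := by
    simp only [← mul_assoc]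
    rw [coe_mul_inv g.1]
    rw [mul_assoc, coe_mul_inv g.2]
    simp

noncomputable def psi (g : SL2 × SL2) : (Fin 4 → ℂ) ≃ₗ[ℂ] (Fin 4 → ℂ) :=
  biqEquiv ≪≫ₗ conjAction g ≪≫ₗ biqEquiv.symm

lemma biq_psi (g : SL2 × SL2) (p : Fin 4 → ℂ) :
    biqOfVec (psi g p) = (g.1 : Matrix (Fin 2) (Fin 2) ℂ) * biqOfVec p *
      ((g.2⁻¹ : SL2) : Matrix (Fin 2) (Fin 2) ℂ) := by
  show biqEquiv (psi g p) = _
  simp [psi, conjAction]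
  rfl

lemma part3 (g₁ g₂ : SL2) :
    (∀ Q : Matrix (Fin 2) (Fin 2) ℂ,
        (g₁ : Matrix (Fin 2) (Fin 2) ℂ) * Q *
          ((g₂⁻¹ : SL2) : Matrix (Fin 2) (Fin 2) ℂ) = Q)
      ↔ (((g₁ : Matrix (Fin 2) (Fin 2) ℂ) = 1 ∧ (g₂ : Matrix (Fin 2) (Fin 2) ℂ) = 1)
          ∨ ((g₁ : Matrix (Fin 2) (Fin 2) ℂ) = -1 ∧ (g₂ : Matrix (Fin 2) (Fin 2) ℂ) = -1)) := by
  set A : Matrix (Fin 2) (Fin 2) ℂ := (g₁ : Matrix (Fin 2) (Fin 2) ℂ) with hA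
  set B : Matrix (Fin 2) (Fin 2) ℂ := ((g₂⁻¹ : SL2) : Matrix (Fin 2) (Fin 2) ℂ) with hB
  constructor
  · intro h
    have h1 : A * B = 1 := by simpa using h 1
    have hBA : B * A = 1 := mul_eq_one_comm.mp h1
    have hg2 : (g₂ : Matrix (Fin 2) (Fin 2) ℂ) = A := by
      calc (g₂ : Matrix (Fin 2) (Fin 2) ℂ) = (g₂ : Matrix (Fin 2) (Fin 2) ℂ) * (B * A) := by
            rw [hBA, mul_one]
        _ = ((g₂ : Matrix (Fin 2) (Fin 2) ℂ) * B) * A := by rw [mul_assoc]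
        _ = A := by rw [coe_mul_inv g₂, one_mul]
    have hcomm : ∀ Q : Matrix (Fin 2) (Fin 2) ℂ, A * Q = Q * A := by
      intro Q
      calc A * Q = A * Q * (B * A) := by rw [hBA, mul_one]
        _ = (A * Q * B) * A := by noncomm_ring
        _ = Q * A := by rw [h Q]
    have e1 := hcomm !![(0:ℂ),1;0,0]
    have e2 := hcomm !![(0:ℂ),0;1,0]
    have c0 : A 1 0 = 0 := by
      have := congrFun (congrFun e1 1) 1
      simpa [Matrix.mul_apply, Fin.sum_univ_two] using this
    have c1 : A 0 0 = A 1 1 := by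
      have := congrFun (congrFun e1 0) 1
      simpa [Matrix.mul_apply, Fin.sum_univ_two, c0] using this
    have c2 : A 0 1 = 0 := by
      have := congrFun (congrFun e2 0) 0
      simpa [Matrix.mul_apply, Fin.sum_univ_two] using this
    have hdet : A.det = 1 := g₁.prop
    rw [Matrix.det_fin_two, c0, c2, ← c1] at hdet
    simp only [mul_zero, zero_mul, sub_zero] at hdet
    have ha : A 0 0 = 1 ∨ A 0 0 = -1 := mul_self_eq_one_iff.mp hdet
    have heta : A = !![A 0 0, A 0 1; A 1 0, A 1 1] := Matrix.eta_fin_two A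
    rcases ha with ha | ha
    · left
      have : A = 1 := by
        rw [heta, c0, c2, ← c1, ha]
        rw [Matrix.one_fin_two]
      exact ⟨this, hg2.trans this⟩
    · right
      have : A = -1 := by
        rw [heta, c0, c2, ← c1, ha]
        rw [show (-1 : Matrix (Fin 2) (Fin 2) ℂ) = -(1:Matrix (Fin 2) (Fin 2) ℂ) from rfl,
          Matrix.one_fin_two]
        norm_num
      exact ⟨this, hg2.trans this⟩
  · rintro (⟨h1, h2⟩ | ⟨h1, h2⟩) <;> intro Q
    · have hB1 : B = 1 := by
        have := coe_inv_mul g₂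
        rw [h2, mul_one] at this
        exact this
      rw [h1, hB1, one_mul, mul_one]
    · have hB1 : B = -1 := by
        have := coe_inv_mul g₂
        rw [h2] at this
        have : -B = 1 := by simpa only [mul_neg, mul_one] using this
        exact neg_eq_iff_eq_neg.mp this
      rw [h1, hB1]
      simp

lemma part1 (g₁ g₂ : SL2) (Q : Matrix (Fin 2) (Fin 2) ℂ) :
    ((g₁ : Matrix (Fin 2) (Fin 2) ℂ) * Q *
      ((g₂⁻¹ : SL2) : Matrix (Fin 2) (Fin 2) ℂ)).det = Q.det := by
  rw [Matrix.det_mul, Matrix.det_mul, g₁.prop, (g₂⁻¹).prop, one_mul, mul_one]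

lemma psi_mem (g : SL2 × SL2) : psi g ∈ stdOrthogonalGroup := by
  intro p
  rw [← biq_det, ← biq_det p, biq_psi]
  exact part1 g.1 g.2 (biqOfVec p)

lemma biq_inj : Function.Injective biqOfVec := biqEquiv.injective

noncomputable def phi : (SL2 × SL2) →* stdOrthogonalGroup where
  toFun g := ⟨psi g, psi_mem g⟩
  map_one' := by
    apply Subtype.ext
    apply LinearEquiv.toLinearMap_injective
    apply LinearMap.ext
    intro p
    apply biq_inj
    show biqOfVec (psi 1 p) = biqOfVec p
    rw [biq_psi]
    simp
  map_mul' g h := by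
    apply Subtype.ext
    apply LinearEquiv.toLinearMap_injective
    apply LinearMap.ext
    intro p
    apply biq_inj
    show biqOfVec (psi (g * h) p) = biqOfVec (psi g (psi h p))
    rw [biq_psi, biq_psi, biq_psi]
    simp [_root_.mul_inv_rev, mul_assoc]

lemma phi_ker (g : SL2 × SL2) :
    g ∈ phi.ker
      ↔ (((g.1 : Matrix (Fin 2) (Fin 2) ℂ) = 1 ∧ (g.2 : Matrix (Fin 2) (Fin 2) ℂ) = 1)
        ∨ ((g.1 : Matrix (Fin 2) (Fin 2) ℂ) = -1 ∧ (g.2 : Matrix (Fin 2) (Fin 2) ℂ) = -1)) := by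
  rw [MonoidHom.mem_ker, ← part3 g.1 g.2]
  constructor
  · intro h Q
    have h1 : psi g = 1 := congrArg Subtype.val h
    have h2 : psi g (biqEquiv.symm Q) = biqEquiv.symm Q := by rw [h1]; rfl
    have h3 := congrArg biqOfVec h2
    rw [biq_psi] at h3
    have h4 : biqOfVec (biqEquiv.symm Q) = Q := biqEquiv.apply_symm_apply Q
    rwa [h4] at h3
  · intro h
    apply Subtype.ext
    apply LinearEquiv.toLinearMap_injective
    apply LinearMap.ext
    intro p
    apply biq_inj
    show biqOfVec (psi g p) = biqOfVec p
    rw [biq_psi]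
    exact h (biqOfVec p)

/-- for every `(g₁,g₂) ∈ SL(2,ℂ) × SL(2,ℂ)`, the action `Q ↦ g₁ Q g₂⁻¹`
on `M₂(ℂ) ≅ ℂ⁴` preserves the determinant, i.e. the standard complex quadratic form
under the biquaternion identification; `g₁ Q g₂⁻¹ = Q` for all `Q` iff
`(g₁,g₂) = (1,1)` or `(g₁,g₂) = (-1,-1)`; and consequently the action defines a group
homomorphism to the orthogonal group of the standard quadratic form on `ℂ⁴` with
kernel `{(1,1), (-1,-1)}`. -/
theorem sl2_times_sl2_action_preserves_det :
    (∀ (g₁ g₂ : Matrix.SpecialLinearGroup (Fin 2) ℂ) (Q : Matrix (Fin 2) (Fin 2) ℂ),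
      ((g₁ : Matrix (Fin 2) (Fin 2) ℂ) * Q *
        ((g₂⁻¹ : Matrix.SpecialLinearGroup (Fin 2) ℂ) : Matrix (Fin 2) (Fin 2) ℂ)).det = Q.det)
    ∧ (∀ p : Fin 4 → ℂ, (biqOfVec p).det = stdQuadForm p)
    ∧ (∀ g₁ g₂ : Matrix.SpecialLinearGroup (Fin 2) ℂ,
        (∀ Q : Matrix (Fin 2) (Fin 2) ℂ,
            (g₁ : Matrix (Fin 2) (Fin 2) ℂ) * Q *
              ((g₂⁻¹ : Matrix.SpecialLinearGroup (Fin 2) ℂ) : Matrix (Fin 2) (Fin 2) ℂ) = Q)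
          ↔ (((g₁ : Matrix (Fin 2) (Fin 2) ℂ) = 1 ∧ (g₂ : Matrix (Fin 2) (Fin 2) ℂ) = 1)
              ∨ ((g₁ : Matrix (Fin 2) (Fin 2) ℂ) = -1 ∧ (g₂ : Matrix (Fin 2) (Fin 2) ℂ) = -1)))
    ∧ ∃ φ : (Matrix.SpecialLinearGroup (Fin 2) ℂ × Matrix.SpecialLinearGroup (Fin 2) ℂ) →*
          stdOrthogonalGroup,
        (∀ (g : Matrix.SpecialLinearGroup (Fin 2) ℂ × Matrix.SpecialLinearGroup (Fin 2) ℂ)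
            (p : Fin 4 → ℂ),
          biqOfVec (((φ g : ((Fin 4 → ℂ) ≃ₗ[ℂ] (Fin 4 → ℂ)))) p)
            = (g.1 : Matrix (Fin 2) (Fin 2) ℂ) * biqOfVec p *
                ((g.2⁻¹ : Matrix.SpecialLinearGroup (Fin 2) ℂ) : Matrix (Fin 2) (Fin 2) ℂ))
        ∧ (∀ g : Matrix.SpecialLinearGroup (Fin 2) ℂ × Matrix.SpecialLinearGroup (Fin 2) ℂ,
            g ∈ φ.ker
              ↔ (((g.1 : Matrix (Fin 2) (Fin 2) ℂ) = 1 ∧ (g.2 : Matrix (Fin 2) (Fin 2) ℂ) = 1)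
                ∨ ((g.1 : Matrix (Fin 2) (Fin 2) ℂ) = -1
                    ∧ (g.2 : Matrix (Fin 2) (Fin 2) ℂ) = -1))) := by
  refine ⟨part1, biq_det, part3, phi, ?_, ?_⟩
  · intro g p
    exact biq_psi g p
  · exact phi_ker
end

section
/- Let m₁, m₂ > 0, let ψ > 0, and let f be a nonzero real number. Set N = [[0,1],[0,0]] and q_R = cosh(ψ)·1 + i sinh(ψ)·I = diag(e^{-ψ}, e^{ψ}), so that Im(q_R) = diag(-sinh ψ, sinh ψ). Then there exist no traceless matrices L₁, L₂ ∈ M₂(ℂ) satisfying [N, L₁] = f·Im(q_R), [N, L₂] = -f·Im(q_R), and [N, q_R] = -(1/m₁) L₁ q_R + (1/m₂) q_R L₂. In particular, for a strictly attractive potential there are no parabolic relative equilibria of the 2-body problem on hyperbolic 3-space. -/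
open Matrix

/-- there are no parabolic relative equilibria — no traceless `L₁, L₂`
satisfy the relative equilibrium equations generated by the nilpotent element
`N = [[0,1],[0,0]]` with `q_R = diag(e^{-ψ}, e^{ψ})` when `ψ > 0`, the masses are
positive and `f ≠ 0` (strictly attractive potential). -/
theorem no_parabolic_relative_equilibria
    (m₁ m₂ ψ f : ℝ) (hm₁ : 0 < m₁) (hm₂ : 0 < m₂) (hψ : 0 < ψ) (hf : f ≠ 0) :
    let N : Matrix (Fin 2) (Fin 2) ℂ := !![0, 1; 0, 0]
    let qR : Matrix (Fin 2) (Fin 2) ℂ := !![(Real.exp (-ψ) : ℂ), 0; 0, (Real.exp ψ : ℂ)]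
    let ImqR : Matrix (Fin 2) (Fin 2) ℂ := !![(-(Real.sinh ψ) : ℂ), 0; 0, (Real.sinh ψ : ℂ)]
    ¬ ∃ L₁ L₂ : Matrix (Fin 2) (Fin 2) ℂ, L₁.trace = 0 ∧ L₂.trace = 0
        ∧ N * L₁ - L₁ * N = (f : ℂ) • ImqR
        ∧ N * L₂ - L₂ * N = (-(f : ℂ)) • ImqR
        ∧ N * qR - qR * N = (-(1 / (m₁ : ℂ))) • (L₁ * qR) + (1 / (m₂ : ℂ)) • (qR * L₂) := by
  intro N qR ImqR
  rintro ⟨L₁, L₂, -, -, h3, h4, h5⟩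
  have e1 := congrFun (congrFun h3 0) 0
  have e2 := congrFun (congrFun h4 0) 0
  have e5 := congrFun (congrFun h5 1) 0
  simp only [N, qR, ImqR, Matrix.sub_apply, Matrix.add_apply, Matrix.smul_apply,
    Matrix.mul_apply, Fin.sum_univ_two, Matrix.cons_val', Matrix.cons_val_zero,
    Matrix.cons_val_one, Matrix.head_cons, Matrix.head_fin_const, Matrix.empty_val',
    Matrix.cons_val_fin_one, Matrix.of_apply, smul_eq_mul] at e1 e2 e5
  norm_num at e1 e2 e5
  have hkey : (f:ℂ) * Complex.sinh ψ * (Complex.exp (-(ψ:ℂ)) / m₁ + Complex.exp ψ / m₂) = 0 := by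
    rw [e1, e2] at e5
    field_simp at e5 ⊢
    linear_combination -e5
  rw [show ((ψ:ℂ)) = ((ψ:ℝ):ℂ) from rfl, ← Complex.ofReal_neg, ← Complex.ofReal_exp,
    ← Complex.ofReal_exp, ← Complex.ofReal_sinh] at hkey
  have hs : (0:ℝ) < Real.sinh ψ := Real.sinh_pos_iff.mpr hψ
  rcases mul_eq_zero.mp hkey with h | h
  · rcases mul_eq_zero.mp h with h | h
    · exact hf (by exact_mod_cast h)
    · exact hs.ne' (by exact_mod_cast h)
  · have h' : Real.exp (-ψ) / m₁ + Real.exp ψ / m₂ = 0 := by exact_mod_cast h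
    have := add_pos (div_pos (Real.exp_pos (-ψ)) hm₁) (div_pos (Real.exp_pos ψ) hm₂)
    linarith
end

section
/- For all masses m₁, m₂ > 0 and all ψ > 0 there exists a unique pair of positive real numbers (χ₁, χ₂) satisfying χ₁ + χ₂ = ψ and m₁ sinh(2χ₁) = m₂ sinh(2χ₂). -/
/-- for all masses `m₁, m₂ > 0` and all `ψ > 0` there exists a unique pair
of positive reals `(χ₁, χ₂)` with `χ₁ + χ₂ = ψ` and `m₁ sinh 2χ₁ = m₂ sinh 2χ₂`. -/
theorem existsUnique_chi_pair (m₁ m₂ ψ : ℝ) (hm₁ : 0 < m₁) (hm₂ : 0 < m₂) (hψ : 0 < ψ) :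
    ∃! χ : ℝ × ℝ, 0 < χ.1 ∧ 0 < χ.2 ∧ χ.1 + χ.2 = ψ
      ∧ m₁ * Real.sinh (2 * χ.1) = m₂ * Real.sinh (2 * χ.2) := by
  set f : ℝ → ℝ := fun x => m₁ * Real.sinh (2 * x) - m₂ * Real.sinh (2 * (ψ - x)) with hf
  have hmono : StrictMono f := by
    intro a b hab
    have h1 : m₁ * Real.sinh (2 * a) < m₁ * Real.sinh (2 * b) := by
      apply mul_lt_mul_of_pos_left _ hm₁
      exact Real.sinh_lt_sinh.mpr (by linarith)
    have h2 : m₂ * Real.sinh (2 * (ψ - b)) < m₂ * Real.sinh (2 * (ψ - a)) := by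
      apply mul_lt_mul_of_pos_left _ hm₂
      exact Real.sinh_lt_sinh.mpr (by linarith)
    simp only [hf]
    linarith
  have hcont : Continuous f := by fun_prop
  have hsψ : 0 < Real.sinh (2 * ψ) := by positivity
  have hf0 : f 0 < 0 := by
    simp only [hf, mul_zero, Real.sinh_zero, sub_zero]
    nlinarith
  have hfψ : 0 < f ψ := by
    simp only [hf, sub_self, mul_zero, Real.sinh_zero]
    nlinarith
  have hmem : (0 : ℝ) ∈ Set.Ioo (f 0) (f ψ) := ⟨hf0, hfψ⟩
  obtain ⟨x, hx, hfx⟩ := intermediate_value_Ioo hψ.le hcont.continuousOn hmem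
  refine ⟨(x, ψ - x), ⟨hx.1, by simp [hx.2], by ring, ?_⟩, ?_⟩
  · have : f x = 0 := hfx
    simp only [hf] at this
    linarith
  · rintro ⟨a, b⟩ ⟨ha, hb, hab, heq⟩
    have hbdef : b = ψ - a := by linarith
    have hfa : f a = 0 := by
      simp only [hf, ← hbdef]
      linarith
    have : a = x := hmono.injective (by rw [hfa, hfx])
    simp [this, hbdef]
end

section
/- Let m₁, m₂ > 0 and ψ > 0, and let (χ₁, χ₂) be the unique pair of positive reals with χ₁ + χ₂ = ψ and m₁ sinh(2χ₁) = m₂ sinh(2χ₂). Set Z = sqrt((m₁ + m₂ e^{2ψ})(m₂ + m₁ e^{2ψ})) and ζ = m₁ sinh(2χ₁). Then sinh(2χ₁) = m₂ e^{ψ} sinh(2ψ)/Z, cosh(2χ₁) = e^{ψ}(m₁ + m₂ cosh(2ψ))/Z, and ζ = m₁ m₂ Z^{-1} e^{ψ} sinh(2ψ). -/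
/-- with `(χ₁, χ₂)` the unique pair of positive reals satisfying
`χ₁ + χ₂ = ψ` and `m₁ sinh 2χ₁ = m₂ sinh 2χ₂`, and with
`Z = sqrt((m₁ + m₂e^{2ψ})(m₂ + m₁e^{2ψ}))` and `ζ = m₁ sinh 2χ₁`, one has
`sinh 2χ₁ = m₂ e^ψ sinh 2ψ / Z`, `cosh 2χ₁ = e^ψ (m₁ + m₂ cosh 2ψ)/Z` and
`ζ = m₁ m₂ Z⁻¹ e^ψ sinh 2ψ`. -/
theorem chi_formulas (m₁ m₂ ψ χ₁ χ₂ : ℝ) (hm₁ : 0 < m₁) (hm₂ : 0 < m₂) (hψ : 0 < ψ)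
    (hχ₁ : 0 < χ₁) (hχ₂ : 0 < χ₂) (hsum : χ₁ + χ₂ = ψ)
    (hbal : m₁ * Real.sinh (2 * χ₁) = m₂ * Real.sinh (2 * χ₂)) :
    let Z := Real.sqrt ((m₁ + m₂ * Real.exp (2 * ψ)) * (m₂ + m₁ * Real.exp (2 * ψ)))
    let ζ := m₁ * Real.sinh (2 * χ₁)
    Real.sinh (2 * χ₁) = m₂ * Real.exp ψ * Real.sinh (2 * ψ) / Z
    ∧ Real.cosh (2 * χ₁) = Real.exp ψ * (m₁ + m₂ * Real.cosh (2 * ψ)) / Z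
    ∧ ζ = m₁ * m₂ * Z⁻¹ * Real.exp ψ * Real.sinh (2 * ψ) := by
  intro Z ζ
  set s := Real.sinh (2 * χ₁) with hs
  set c := Real.cosh (2 * χ₁) with hc
  set A := m₁ + m₂ * Real.cosh (2 * ψ) with hA
  set B := m₂ * Real.sinh (2 * ψ) with hB
  set D := m₁ ^ 2 + m₂ ^ 2 + 2 * m₁ * m₂ * Real.cosh (2 * ψ) with hD
  have hcosh1 : (1:ℝ) ≤ Real.cosh (2 * ψ) := Real.one_le_cosh _
  have hDpos : 0 < D := by
    rw [hD]; nlinarith [mul_pos hm₁ hm₂, sq_nonneg (m₁ - m₂)]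
  have hs_pos : 0 < s := Real.sinh_pos_iff.2 (by linarith)
  have hc_pos : 0 < c := by rw [hc]; exact Real.cosh_pos _
  have hsinhψ : 0 < Real.sinh (2 * ψ) := Real.sinh_pos_iff.2 (by linarith)
  have hBpos : 0 < B := mul_pos hm₂ hsinhψ
  have hApos : 0 < A := by rw [hA]; nlinarith [mul_pos hm₂ (lt_of_lt_of_le one_pos hcosh1)]
  -- key balance identity
  have h2 : 2 * χ₂ = 2 * ψ - 2 * χ₁ := by linarith
  have hsub : Real.sinh (2 * χ₂)
      = Real.sinh (2 * ψ) * c - Real.cosh (2 * ψ) * s := by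
    rw [h2, Real.sinh_sub, hs, hc]
  have key : A * s = B * c := by
    rw [hsub] at hbal; rw [hA, hB]; ring_nf; ring_nf at hbal; linarith
  have hc2 : c ^ 2 = s ^ 2 + 1 := by rw [hc, hs]; exact Real.cosh_sq _
  have hcψ : Real.cosh (2 * ψ) ^ 2 = Real.sinh (2 * ψ) ^ 2 + 1 := Real.cosh_sq _
  have hAB : A ^ 2 - B ^ 2 = D := by
    rw [hA, hB, hD]; linear_combination m₂ ^ 2 * hcψ
  have hsD : s ^ 2 * D = B ^ 2 := by
    linear_combination (-(s ^ 2)) * hAB + B ^ 2 * hc2 + (A * s + B * c) * key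
  have hcD : c ^ 2 * D = A ^ 2 := by
    linear_combination (-(c ^ 2)) * hAB + A ^ 2 * hc2 + (A * s + B * c) * key
  have hsqD : 0 < Real.sqrt D := Real.sqrt_pos.2 hDpos
  have hsB : s * Real.sqrt D = B := by
    have : (s * Real.sqrt D) ^ 2 = B ^ 2 := by
      rw [mul_pow, Real.sq_sqrt hDpos.le, hsD]
    have h1 : 0 ≤ s * Real.sqrt D := by positivity
    calc s * Real.sqrt D = Real.sqrt ((s * Real.sqrt D) ^ 2) := (Real.sqrt_sq h1).symm
      _ = Real.sqrt (B ^ 2) := by rw [this]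
      _ = B := Real.sqrt_sq hBpos.le
  have hcA : c * Real.sqrt D = A := by
    have : (c * Real.sqrt D) ^ 2 = A ^ 2 := by
      rw [mul_pow, Real.sq_sqrt hDpos.le, hcD]
    have h1 : 0 ≤ c * Real.sqrt D := by positivity
    calc c * Real.sqrt D = Real.sqrt ((c * Real.sqrt D) ^ 2) := (Real.sqrt_sq h1).symm
      _ = Real.sqrt (A ^ 2) := by rw [this]
      _ = A := Real.sqrt_sq hApos.le
  -- Z = e^ψ * sqrt D
  have hE : Real.exp (2 * ψ) = Real.exp ψ ^ 2 := by
    rw [two_mul, Real.exp_add]; ring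
  have hEpos : 0 < Real.exp ψ := Real.exp_pos _
  have hcosh : Real.cosh (2 * ψ) = (Real.exp ψ ^ 2 + (Real.exp ψ ^ 2)⁻¹) / 2 := by
    rw [Real.cosh_eq, Real.exp_neg, hE]
  have hprod : (m₁ + m₂ * Real.exp (2 * ψ)) * (m₂ + m₁ * Real.exp (2 * ψ))
      = Real.exp ψ ^ 2 * D := by
    rw [hE, hD, hcosh]; field_simp; ring
  have hZ : Z = Real.exp ψ * Real.sqrt D := by
    show Real.sqrt _ = _
    rw [hprod, Real.sqrt_mul (by positivity), Real.sqrt_sq hEpos.le]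
  have hZpos : 0 < Real.exp ψ * Real.sqrt D := by positivity
  refine ⟨?_, ?_, ?_⟩
  · rw [hZ]
    field_simp
    linear_combination hsB + hB
  · rw [hZ]
    field_simp
    linear_combination hcA
  · show m₁ * s = _
    rw [hZ, mul_inv_rev]
    rw [eq_comm]
    field_simp
    linear_combination -hsB - hB
end

section
/- Let m > 0, χ ∈ ℝ, and η ∈ ℂ. Set S = diag(η, -η) and q = cosh(χ)·1 + sinh(χ)·j. Then the matrix L = -m (S q + q S†) q⁻¹ equals -m(η + η̄ cosh(2χ))·σ₃ + m η̄ sinh(2χ)·J; equivalently, writing L = x I + y J with respect to the biquaternion basis, x = i m (η + η̄ cosh 2χ) and y = m η̄ sinh 2χ. -/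
open Matrix

/-- for a particle of mass `m` at `q = cosh(χ)·1 + sinh(χ)·j` moving along
the orbit of `exp(St)` with `S = diag(η, -η)`, the left-momentum
`L = -m (S q + q S†) q⁻¹` equals `-m(η + η̄ cosh 2χ)·σ₃ + m η̄ sinh 2χ·J`, equivalently
`L = x I + y J` with `x = i m (η + η̄ cosh 2χ)` and `y = m η̄ sinh 2χ`. -/
theorem left_momentum_of_reconstructed_solution (m χ : ℝ) (hm : 0 < m) (η : ℂ) :
    let S : Matrix (Fin 2) (Fin 2) ℂ := !![η, 0; 0, -η]
    let jmat : Matrix (Fin 2) (Fin 2) ℂ := !![0, 1; 1, 0]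
    let q : Matrix (Fin 2) (Fin 2) ℂ :=
      (Real.cosh χ : ℂ) • (1 : Matrix (Fin 2) (Fin 2) ℂ) + (Real.sinh χ : ℂ) • jmat
    let σ₃ : Matrix (Fin 2) (Fin 2) ℂ := !![1, 0; 0, -1]
    let Imat : Matrix (Fin 2) (Fin 2) ℂ := !![Complex.I, 0; 0, -Complex.I]
    let Jmat : Matrix (Fin 2) (Fin 2) ℂ := !![0, 1; -1, 0]
    let L : Matrix (Fin 2) (Fin 2) ℂ := (-(m : ℂ)) • ((S * q + q * Sᴴ) * q⁻¹)
    L = (-((m : ℂ) * (η + (starRingEnd ℂ) η * (Real.cosh (2 * χ) : ℂ)))) • σ₃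
        + ((m : ℂ) * (starRingEnd ℂ) η * (Real.sinh (2 * χ) : ℂ)) • Jmat
    ∧ L = (Complex.I * (m : ℂ) * (η + (starRingEnd ℂ) η * (Real.cosh (2 * χ) : ℂ))) • Imat
        + ((m : ℂ) * (starRingEnd ℂ) η * (Real.sinh (2 * χ) : ℂ)) • Jmat := by
  intro S jmat q σ₃ Imat Jmat L
  have hid : Complex.cosh (χ : ℂ) ^ 2 - Complex.sinh (χ : ℂ) ^ 2 = 1 :=
    Complex.cosh_sq_sub_sinh_sq χ
  have hc2 : Complex.cosh (2 * χ) = Complex.cosh χ ^ 2 + Complex.sinh χ ^ 2 := by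
    rw [Complex.cosh_two_mul]
  have hs2 : Complex.sinh (2 * χ) = 2 * Complex.sinh χ * Complex.cosh χ := by
    rw [Complex.sinh_two_mul]
  have hq : q = !![(Real.cosh χ : ℂ), (Real.sinh χ : ℂ);
                   (Real.sinh χ : ℂ), (Real.cosh χ : ℂ)] := by
    ext i k
    fin_cases i <;> fin_cases k <;> simp [q, jmat, Matrix.one_apply]
  have hSH : Sᴴ = !![(starRingEnd ℂ) η, 0; 0, -((starRingEnd ℂ) η)] := by
    ext i k
    fin_cases i <;> fin_cases k <;> simp [S, Matrix.conjTranspose_apply]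
  have hqinv : q⁻¹ = !![(Real.cosh χ : ℂ), -(Real.sinh χ : ℂ);
                        -(Real.sinh χ : ℂ), (Real.cosh χ : ℂ)] := by
    apply Matrix.inv_eq_right_inv
    rw [hq, Matrix.mul_fin_two]
    ext i k
    fin_cases i <;> fin_cases k <;> simp [Matrix.one_apply] <;>
      push_cast <;> (first | ring1 | linear_combination hid | linear_combination -hid | linear_combination 2*hid | linear_combination -2*hid)
  have key : L = (-((m : ℂ) * (η + (starRingEnd ℂ) η * (Real.cosh (2 * χ) : ℂ)))) • σ₃
        + ((m : ℂ) * (starRingEnd ℂ) η * (Real.sinh (2 * χ) : ℂ)) • Jmat := by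
    show (-(m : ℂ)) • ((S * q + q * Sᴴ) * q⁻¹) = _
    rw [hqinv, hq, hSH]
    show (-(m : ℂ)) • ((!![η, 0; 0, -η] * _ + _) * _) = _
    rw [Matrix.mul_fin_two, Matrix.mul_fin_two]
    ext i k
    fin_cases i <;> fin_cases k <;>
      (simp [σ₃, Jmat, Matrix.mul_apply, Fin.sum_univ_two]
       push_cast
       simp only [hc2, hs2]
       first | ring1 | linear_combination (m : ℂ) * η * hid | (left; linear_combination η * hid))
  refine ⟨key, ?_⟩
  rw [key]
  ext i k
  fin_cases i <;> fin_cases k <;>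
    simp [σ₃, Imat, Jmat] <;> ring_nf <;>
    simp [Complex.I_sq] <;> ring
end

section
/- Let q₁, q₂ ∈ M₂(ℂ) be positive-definite Hermitian matrices with det q₁ = det q₂ = 1, and suppose q₁ q₂⁻¹ = cosh(ψ)·1 + sinh(ψ)·j for some real ψ ≠ 0. Then there exist real numbers χ₁, χ₂ with χ₁ + χ₂ = ψ such that q₁ = cosh(χ₁)·1 + sinh(χ₁)·j and q₂ = cosh(χ₂)·1 - sinh(χ₂)·j. -/
open Matrix
open scoped ComplexOrder

/-- if `q₁, q₂` are positive-definite Hermitian matrices of determinant `1`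
with `q₁ q₂⁻¹ = cosh(ψ)·1 + sinh(ψ)·j` for some real `ψ ≠ 0`, then there exist reals
`χ₁, χ₂` with `χ₁ + χ₂ = ψ`, `q₁ = cosh(χ₁)·1 + sinh(χ₁)·j` and
`q₂ = cosh(χ₂)·1 - sinh(χ₂)·j`. -/
theorem reconstruction_on_geodesic (q₁ q₂ : Matrix (Fin 2) (Fin 2) ℂ)
    (h₁pd : q₁.PosDef) (h₂pd : q₂.PosDef)
    (h₁det : q₁.det = 1) (h₂det : q₂.det = 1)
    (ψ : ℝ) (hψ : ψ ≠ 0)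
    (hrel : q₁ * q₂⁻¹ = (Real.cosh ψ : ℂ) • (1 : Matrix (Fin 2) (Fin 2) ℂ)
        + (Real.sinh ψ : ℂ) • !![0, 1; 1, 0]) :
    ∃ χ₁ χ₂ : ℝ, χ₁ + χ₂ = ψ
      ∧ q₁ = (Real.cosh χ₁ : ℂ) • (1 : Matrix (Fin 2) (Fin 2) ℂ)
          + (Real.sinh χ₁ : ℂ) • !![0, 1; 1, 0]
      ∧ q₂ = (Real.cosh χ₂ : ℂ) • (1 : Matrix (Fin 2) (Fin 2) ℂ)
          - (Real.sinh χ₂ : ℂ) • !![0, 1; 1, 0] := by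
  have h₂d0 : IsUnit q₂.det := by rw [h₂det]; exact isUnit_one
  -- q₁ = M * q₂
  have hq₁ : q₁ = ((Real.cosh ψ : ℂ) • (1 : Matrix (Fin 2) (Fin 2) ℂ)
      + (Real.sinh ψ : ℂ) • !![0, 1; 1, 0]) * q₂ := by
    rw [← hrel, Matrix.mul_assoc, Matrix.nonsing_inv_mul _ h₂d0, mul_one]
  set c : ℝ := Real.cosh ψ with hc
  set s : ℝ := Real.sinh ψ with hs
  have hs0 : s ≠ 0 := by
    simpa [hs] using Real.sinh_ne_zero.mpr hψ
  have hs0' : (s : ℂ) ≠ 0 := by exact_mod_cast hs0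
  -- entrywise equations
  have h00 : q₁ 0 0 = (c : ℂ) * q₂ 0 0 + (s : ℂ) * q₂ 1 0 := by
    have := congrFun (congrFun hq₁ 0) 0
    simp [Matrix.mul_apply, Fin.sum_univ_two] at this
    linear_combination this
  have h01 : q₁ 0 1 = (c : ℂ) * q₂ 0 1 + (s : ℂ) * q₂ 1 1 := by
    have := congrFun (congrFun hq₁ 0) 1
    simp [Matrix.mul_apply, Fin.sum_univ_two] at this
    linear_combination this
  have h10 : q₁ 1 0 = (s : ℂ) * q₂ 0 0 + (c : ℂ) * q₂ 1 0 := by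
    have := congrFun (congrFun hq₁ 1) 0
    simp [Matrix.mul_apply, Fin.sum_univ_two] at this
    linear_combination this
  have h11 : q₁ 1 1 = (s : ℂ) * q₂ 0 1 + (c : ℂ) * q₂ 1 1 := by
    have := congrFun (congrFun hq₁ 1) 1
    simp [Matrix.mul_apply, Fin.sum_univ_two] at this
    linear_combination this
  -- Hermitian facts
  have h₁h := h₁pd.1
  have h₂h := h₂pd.1
  have ha : (starRingEnd ℂ) (q₂ 0 0) = q₂ 0 0 := h₂h.apply 0 0
  have hd : (starRingEnd ℂ) (q₂ 1 1) = q₂ 1 1 := h₂h.apply 1 1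
  have hb : (starRingEnd ℂ) (q₂ 0 1) = q₂ 1 0 := h₂h.apply 1 0
  have h1a : (starRingEnd ℂ) (q₁ 0 0) = q₁ 0 0 := h₁h.apply 0 0
  have h1b : (starRingEnd ℂ) (q₁ 0 1) = q₁ 1 0 := h₁h.apply 1 0
  -- q₂ 1 0 is real
  have hb'real : (starRingEnd ℂ) (q₂ 1 0) = q₂ 1 0 := by
    have := h1a
    rw [h00] at this
    simp only [map_add, _root_.map_mul, Complex.conj_ofReal, ha] at this
    have h2 : (s : ℂ) * (starRingEnd ℂ) (q₂ 1 0) = (s : ℂ) * q₂ 1 0 := by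
      linear_combination this
    exact mul_left_cancel₀ hs0' h2
  have hbb : q₂ 0 1 = q₂ 1 0 := by
    have h3 := congrArg (starRingEnd ℂ) hb
    rwa [Complex.conj_conj, hb'real] at h3
  -- q₂ 1 1 = q₂ 0 0
  have hda : q₂ 1 1 = q₂ 0 0 := by
    have := h1b
    rw [h01, h10] at this
    simp only [map_add, _root_.map_mul, Complex.conj_ofReal, hb, hd] at this
    have h2 : (s : ℂ) * q₂ 1 1 = (s : ℂ) * q₂ 0 0 := by
      linear_combination this
    exact mul_left_cancel₀ hs0' h2
  -- real entries
  set α : ℝ := (q₂ 0 0).re with hα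
  set β : ℝ := (q₂ 1 0).re with hβ
  have haα : q₂ 0 0 = (α : ℂ) := (Complex.conj_eq_iff_re.mp ha).symm ▸ rfl
  have hbβ : q₂ 1 0 = (β : ℂ) := (Complex.conj_eq_iff_re.mp hb'real).symm ▸ rfl
  -- α > 0
  have hαpos : 0 < α := by
    have := h₂pd.dotProduct_mulVec_pos (x := (Pi.single 0 1 : Fin 2 → ℂ)) (by
      intro h; have := congrFun h 0; simp at this)
    have he : star (Pi.single 0 1 : Fin 2 → ℂ) ⬝ᵥ q₂ *ᵥ Pi.single 0 1 = q₂ 0 0 := by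
      simp [dotProduct, Matrix.mulVec, Fin.sum_univ_two, Pi.single_apply]
    rw [he, haα] at this
    exact_mod_cast (Complex.zero_lt_real.mp (by exact_mod_cast this))
  -- determinant relation
  have hdet2 : α ^ 2 - β ^ 2 = 1 := by
    have := h₂det
    rw [Matrix.det_fin_two, hda, hbb, haα, hbβ] at this
    have : ((α ^ 2 - β ^ 2 : ℝ) : ℂ) = ((1 : ℝ) : ℂ) := by push_cast; linear_combination this
    exact_mod_cast this
  refine ⟨ψ + Real.arsinh β, -Real.arsinh β, by ring, ?_, ?_⟩
  · have hcχ : Real.cosh (-Real.arsinh β) = α := by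
      rw [Real.cosh_neg, Real.cosh_arsinh]
      rw [show (1 : ℝ) + β ^ 2 = α ^ 2 by linarith]
      exact Real.sqrt_sq hαpos.le
    have hsχ : Real.sinh (-Real.arsinh β) = -β := by
      rw [Real.sinh_neg, Real.sinh_arsinh]
    have hc1 : Real.cosh (ψ + Real.arsinh β) = c * α + s * β := by
      rw [Real.cosh_add]
      have h1 : Real.cosh (Real.arsinh β) = α := by
        simpa [Real.cosh_neg] using hcχ
      rw [h1, Real.sinh_arsinh]
    have hs1 : Real.sinh (ψ + Real.arsinh β) = s * α + c * β := by
      rw [Real.sinh_add]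
      have h1 : Real.cosh (Real.arsinh β) = α := by
        simpa [Real.cosh_neg] using hcχ
      rw [h1, Real.sinh_arsinh]
    ext i j
    fin_cases i <;> fin_cases j <;>
      simp [h00, h01, h10, h11, haα, hbβ, hbb, hda, hc1, hs1] <;> push_cast <;> ring
  · have hcχ : Real.cosh (-Real.arsinh β) = α := by
      rw [Real.cosh_neg, Real.cosh_arsinh]
      rw [show (1 : ℝ) + β ^ 2 = α ^ 2 by linarith]
      exact Real.sqrt_sq hαpos.le
    have hsχ : Real.sinh (-Real.arsinh β) = -β := by
      rw [Real.sinh_neg, Real.sinh_arsinh]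
    ext i j
    fin_cases i <;> fin_cases j <;>
      simp [haα, hbβ, hbb, hda, hcχ, hsχ] <;> push_cast <;> ring
end

section
/- Let m₁, m₂ > 0, let χ₁, χ₂ > 0, set ψ = χ₁ + χ₂, let f > 0 be real, and let η ∈ ℂ be nonzero. Define y = f sinh(ψ)/(2η), x₁ = i y (coth(2ψ) + (m₁/m₂) csch(2ψ)) + i m₁ η, and x₂ = i y (coth(2ψ) + (m₂/m₁) csch(2ψ)) + i m₂ η. Then the four equations x₁ = i m₁(η + η̄ cosh 2χ₁), x₂ = i m₂(η + η̄ cosh 2χ₂), y = m₁ η̄ sinh(2χ₁), and y = m₂ η̄ sinh(2χ₂) hold simultaneously if and only if m₁ sinh(2χ₁) = m₂ sinh(2χ₂) and |η|² = f sinh(ψ)/(2ζ), where ζ = m₁ sinh(2χ₁). -/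
lemma coth_helper (a b m₁ m₂ : ℝ) (hm₂ : m₂ ≠ 0)
    (hs : Real.sinh (2 * (a + b)) ≠ 0)
    (hζ : m₁ * Real.sinh (2 * a) = m₂ * Real.sinh (2 * b)) :
    Real.sinh (2 * a) * (Real.cosh (2 * (a + b)) / Real.sinh (2 * (a + b))
      + (m₁ / m₂) * (1 / Real.sinh (2 * (a + b)))) = Real.cosh (2 * a) := by
  have h2 : 2 * (a + b) = 2 * a + 2 * b := by ring
  rw [h2] at hs ⊢
  have key : Real.sinh (2 * a) * (Real.cosh (2 * a + 2 * b) * m₂ + m₁)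
      = Real.cosh (2 * a) * Real.sinh (2 * a + 2 * b) * m₂ := by
    rw [Real.sinh_add, Real.cosh_add]
    linear_combination hζ - m₂ * Real.sinh (2 * b) * Real.cosh_sq_sub_sinh_sq (2 * a)
  have h3 : Real.sinh (2 * a) * (Real.cosh (2 * a + 2 * b) / Real.sinh (2 * a + 2 * b)
      + (m₁ / m₂) * (1 / Real.sinh (2 * a + 2 * b)))
      = Real.sinh (2 * a) * (Real.cosh (2 * a + 2 * b) * m₂ + m₁) / (Real.sinh (2 * a + 2 * b) * m₂) := by
    field_simp
  rw [h3, key]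
  rw [mul_div_mul_right _ _ hm₂, mul_div_assoc, div_self hs, mul_one]

/-- the matching conditions classifying semisimple relative equilibria.
With `ψ = χ₁ + χ₂`, `y = f sinh ψ/(2η)`, `x₁ = i y (coth 2ψ + (m₁/m₂) csch 2ψ) + i m₁ η`
and `x₂ = i y (coth 2ψ + (m₂/m₁) csch 2ψ) + i m₂ η`, the four equations
`x₁ = i m₁(η + η̄ cosh 2χ₁)`, `x₂ = i m₂(η + η̄ cosh 2χ₂)`, `y = m₁ η̄ sinh 2χ₁`,
`y = m₂ η̄ sinh 2χ₂` hold simultaneously iff `m₁ sinh 2χ₁ = m₂ sinh 2χ₂` and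
`|η|² = f sinh ψ/(2ζ)` where `ζ = m₁ sinh 2χ₁`. -/
theorem matching_conditions_classify_relative_equilibria
    (m₁ m₂ χ₁ χ₂ f : ℝ) (hm₁ : 0 < m₁) (hm₂ : 0 < m₂)
    (hχ₁ : 0 < χ₁) (hχ₂ : 0 < χ₂) (hf : 0 < f) (η : ℂ) (hη : η ≠ 0) :
    let ψ : ℝ := χ₁ + χ₂
    let y : ℂ := (f : ℂ) * (Real.sinh ψ : ℂ) / (2 * η)
    let x₁ : ℂ := Complex.I * y * ((Real.cosh (2 * ψ) / Real.sinh (2 * ψ) : ℝ)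
        + (m₁ / m₂ : ℝ) * (1 / Real.sinh (2 * ψ) : ℝ)) + Complex.I * (m₁ : ℂ) * η
    let x₂ : ℂ := Complex.I * y * ((Real.cosh (2 * ψ) / Real.sinh (2 * ψ) : ℝ)
        + (m₂ / m₁ : ℝ) * (1 / Real.sinh (2 * ψ) : ℝ)) + Complex.I * (m₂ : ℂ) * η
    ((x₁ = Complex.I * (m₁ : ℂ) * (η + (starRingEnd ℂ) η * (Real.cosh (2 * χ₁) : ℂ))
        ∧ x₂ = Complex.I * (m₂ : ℂ) * (η + (starRingEnd ℂ) η * (Real.cosh (2 * χ₂) : ℂ))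
        ∧ y = (m₁ : ℂ) * (starRingEnd ℂ) η * (Real.sinh (2 * χ₁) : ℂ)
        ∧ y = (m₂ : ℂ) * (starRingEnd ℂ) η * (Real.sinh (2 * χ₂) : ℂ))
      ↔ (m₁ * Real.sinh (2 * χ₁) = m₂ * Real.sinh (2 * χ₂)
        ∧ Complex.normSq η = f * Real.sinh ψ / (2 * (m₁ * Real.sinh (2 * χ₁))))) := by
  intro ψ y x₁ x₂
  have hψ : 0 < ψ := by positivity
  have hsψ : Real.sinh ψ > 0 := Real.sinh_pos_iff.mpr hψ
  have hs2ψ : Real.sinh (2 * ψ) ≠ 0 := ne_of_gt (Real.sinh_pos_iff.mpr (by positivity))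
  have hs₁ : 0 < Real.sinh (2 * χ₁) := Real.sinh_pos_iff.mpr (by positivity)
  have hs₂ : 0 < Real.sinh (2 * χ₂) := Real.sinh_pos_iff.mpr (by positivity)
  have hηc : (starRingEnd ℂ) η ≠ 0 := by simpa using hη
  have hζpos : 0 < m₁ * Real.sinh (2 * χ₁) := by positivity
  have h2η : (2 : ℂ) * η ≠ 0 := by simp [hη]
  constructor
  · rintro ⟨h1, h2, h3, h4⟩
    have heq : (starRingEnd ℂ) η * ((m₁ * Real.sinh (2 * χ₁) : ℝ) : ℂ)
        = (starRingEnd ℂ) η * ((m₂ * Real.sinh (2 * χ₂) : ℝ) : ℂ) := by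
      simp only [Complex.ofReal_mul]
      linear_combination h4 - h3
    have hζ : m₁ * Real.sinh (2 * χ₁) = m₂ * Real.sinh (2 * χ₂) := by
      exact_mod_cast mul_left_cancel₀ hηc heq
    refine ⟨hζ, ?_⟩
    have h := h3
    rw [show y = (f : ℂ) * (Real.sinh ψ : ℂ) / (2 * η) from rfl, div_eq_iff h2η] at h
    have h6 : f * Real.sinh ψ = m₁ * Complex.normSq η * Real.sinh (2 * χ₁) * 2 := by
      apply Complex.ofReal_injective
      simp only [Complex.ofReal_mul, Complex.ofReal_ofNat, ← Complex.mul_conj]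
      linear_combination h
    rw [eq_div_iff (ne_of_gt (by positivity : (0:ℝ) < 2 * (m₁ * Real.sinh (2 * χ₁))))]
    linarith [h6]
  · rintro ⟨hζ, hns⟩
    have hfs : f * Real.sinh ψ = 2 * (m₁ * Real.sinh (2 * χ₁)) * Complex.normSq η := by
      rw [hns]; field_simp
    have hy : y = (m₁ : ℂ) * (starRingEnd ℂ) η * (Real.sinh (2 * χ₁) : ℂ) := by
      show (f : ℂ) * (Real.sinh ψ : ℂ) / (2 * η) = _
      rw [div_eq_iff h2η]
      have h := congrArg (Complex.ofReal) hfs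
      simp only [Complex.ofReal_mul, Complex.ofReal_ofNat, ← Complex.mul_conj] at h
      linear_combination h
    have hζc : ((m₁ : ℂ)) * (Real.sinh (2 * χ₁) : ℂ) = (m₂ : ℂ) * (Real.sinh (2 * χ₂) : ℂ) := by
      have h := congrArg (Complex.ofReal) hζ
      simpa only [Complex.ofReal_mul] using h
    have hy₂ : y = (m₂ : ℂ) * (starRingEnd ℂ) η * (Real.sinh (2 * χ₂) : ℂ) := by
      rw [hy]
      linear_combination (starRingEnd ℂ) η * hζc
    have hA₁ := coth_helper χ₁ χ₂ m₁ m₂ (ne_of_gt hm₂) hs2ψ hζ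
    have hcomm : χ₂ + χ₁ = ψ := by show χ₂ + χ₁ = χ₁ + χ₂; ring
    have hA₂ := coth_helper χ₂ χ₁ m₂ m₁ (ne_of_gt hm₁) (by rwa [hcomm]) hζ.symm
    rw [hcomm] at hA₂
    refine ⟨?_, ?_, hy, hy₂⟩
    · show Complex.I * y * _ + _ = _
      rw [hy]
      have hA₁' : (Real.sinh (2 * χ₁) : ℂ) * (((Real.cosh (2 * ψ) / Real.sinh (2 * ψ) : ℝ) : ℂ)
          + ((m₁ / m₂ : ℝ) : ℂ) * ((1 / Real.sinh (2 * ψ) : ℝ) : ℂ)) = (Real.cosh (2 * χ₁) : ℂ) := by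
        have h := congrArg (Complex.ofReal) hA₁
        simpa only [Complex.ofReal_mul, Complex.ofReal_add] using h
      linear_combination Complex.I * (m₁ : ℂ) * (starRingEnd ℂ) η * hA₁'
    · show Complex.I * y * _ + _ = _
      rw [hy₂]
      have hA₂' : (Real.sinh (2 * χ₂) : ℂ) * (((Real.cosh (2 * ψ) / Real.sinh (2 * ψ) : ℝ) : ℂ)
          + ((m₂ / m₁ : ℝ) : ℂ) * ((1 / Real.sinh (2 * ψ) : ℝ) : ℂ)) = (Real.cosh (2 * χ₂) : ℂ) := by
        have h := congrArg (Complex.ofReal) hA₂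
        simpa only [Complex.ofReal_mul, Complex.ofReal_add] using h
      linear_combination Complex.I * (m₂ : ℂ) * (starRingEnd ℂ) η * hA₂'
end

section
/- Let m > 0, χ ∈ ℝ, and let η ∈ ℂ be nonzero with θ = arg η. Then det(-m(η + η̄ cosh 2χ)·σ₃ + m η̄ sinh(2χ)·J) = -2 |η|² m² (cos 2θ + cosh 2χ). Consequently, for m₁, m₂ > 0 and ψ > 0, with χ₁ determined by χ₁ + χ₂ = ψ and m₁ sinh 2χ₁ = m₂ sinh 2χ₂, χ₁, χ₂ > 0, and with |η|² = Z e^{-ψ}/(2 sinh²ψ sinh 2ψ), the invariant k₁₁ = det L₁ equals -(m₁²/(2 sinh³ψ cosh ψ)) (Z e^{-ψ} cos 2θ + m₁ + m₂ cosh 2ψ), where Z = sqrt((m₁ + m₂ e^{2ψ})(m₂ + m₁ e^{2ψ})). -/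
open Matrix

lemma key1 (η : ℂ) (hη : η ≠ 0) :
    η ^ 2 + (starRingEnd ℂ) η ^ 2
      = ((2 * Complex.normSq η * Real.cos (2 * Complex.arg η) : ℝ) : ℂ) := by
  have habs : ‖η‖ ≠ 0 := norm_ne_zero_iff.mpr hη
  have hcos := Complex.cos_arg hη
  have hsin := Complex.sin_arg η
  have hc2 : Real.cos (2 * Complex.arg η)
      = Real.cos (Complex.arg η) ^ 2 - Real.sin (Complex.arg η) ^ 2 :=
    Real.cos_two_mul' _
  have hns : Complex.normSq η = ‖η‖ ^ 2 := (Complex.sq_norm η).symm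
  have hre : (2 * Complex.normSq η * Real.cos (2 * Complex.arg η) : ℝ)
      = 2 * (η.re ^ 2 - η.im ^ 2) := by
    rw [hc2, hns, hcos, hsin]
    field_simp
  rw [hre]
  apply Complex.ext <;>
    simp [pow_two, Complex.mul_re, Complex.mul_im] <;> ring

lemma part1_s16 (m χ : ℝ) (hm : 0 < m) (η : ℂ) (hη : η ≠ 0) :
      ((-((m : ℂ) * (η + (starRingEnd ℂ) η * (Real.cosh (2 * χ) : ℂ))))
            • (!![1, 0; 0, -1] : Matrix (Fin 2) (Fin 2) ℂ)
          + ((m : ℂ) * (starRingEnd ℂ) η * (Real.sinh (2 * χ) : ℂ))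
            • (!![0, 1; -1, 0] : Matrix (Fin 2) (Fin 2) ℂ)).det
        = ((-2 * Complex.normSq η * m ^ 2
            * (Real.cos (2 * Complex.arg η) + Real.cosh (2 * χ)) : ℝ) : ℂ) := by
  have hk := key1 η hη
  have hmul : ((starRingEnd ℂ) η) * η = (Complex.normSq η : ℂ) := by
    rw [mul_comm]; exact Complex.mul_conj η
  have hch : ((Real.cosh (2*χ) : ℝ) : ℂ) ^ 2 - ((Real.sinh (2*χ) : ℝ) : ℂ) ^ 2 = 1 := by
    norm_cast
    have := Real.cosh_sq_sub_sinh_sq (2*χ)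
    nlinarith [this]
  simp [Matrix.det_fin_two, Matrix.add_apply, Matrix.smul_apply, smul_eq_mul]
  push_cast
  push_cast at hk hch
  linear_combination (-(m:ℂ)^2) * hk + (-2*(m:ℂ)^2*(Complex.cosh (2*(χ:ℂ)))) * hmul + (-(m:ℂ)^2 * ((starRingEnd ℂ) η)^2) * hch

lemma cosh_rel (m₁ m₂ ψ χ₁ χ₂ : ℝ) (h1 : 0 < m₁) (h2 : 0 < m₂) (hψ : 0 < ψ)
    (hsum : χ₁ + χ₂ = ψ) (hbal : m₁ * Real.sinh (2 * χ₁) = m₂ * Real.sinh (2 * χ₂)) :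
    Real.sqrt ((m₁ + m₂ * Real.exp (2 * ψ)) * (m₂ + m₁ * Real.exp (2 * ψ)))
        * Real.exp (-ψ) * Real.cosh (2 * χ₁)
      = m₁ + m₂ * Real.cosh (2 * ψ) := by
  have hApos : 0 < m₁ + m₂ * Real.cosh (2 * ψ) := by
    have := Real.one_le_cosh (2 * ψ); nlinarith
  have h2χ : 2 * χ₂ = 2 * ψ - 2 * χ₁ := by linarith
  have hAs : (m₁ + m₂ * Real.cosh (2 * ψ)) * Real.sinh (2 * χ₁)
      = (m₂ * Real.sinh (2 * ψ)) * Real.cosh (2 * χ₁) := by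
    rw [h2χ, Real.sinh_sub] at hbal
    nlinarith [hbal]
  have hPpos : 0 ≤ (m₁ + m₂ * Real.exp (2 * ψ)) * (m₂ + m₁ * Real.exp (2 * ψ)) := by
    positivity
  have hE0 : (0:ℝ) < Real.exp ψ := Real.exp_pos ψ
  have he2 : Real.exp (2 * ψ) = Real.exp ψ ^ 2 := by
    rw [two_mul, Real.exp_add, sq]
  have hen : Real.exp (-ψ) = (Real.exp ψ)⁻¹ := Real.exp_neg ψ
  have hch2 : Real.cosh (2 * ψ) = (Real.exp ψ ^ 2 + (Real.exp ψ ^ 2)⁻¹) / 2 := by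
    rw [Real.cosh_eq, Real.exp_neg, he2]
  have hsh2 : Real.sinh (2 * ψ) = (Real.exp ψ ^ 2 - (Real.exp ψ ^ 2)⁻¹) / 2 := by
    rw [Real.sinh_eq, Real.exp_neg, he2]
  have hZ2 : (Real.sqrt ((m₁ + m₂ * Real.exp (2 * ψ)) * (m₂ + m₁ * Real.exp (2 * ψ)))
        * Real.exp (-ψ)) ^ 2
      = (m₁ + m₂ * Real.cosh (2 * ψ)) ^ 2 - (m₂ * Real.sinh (2 * ψ)) ^ 2 := by
    rw [mul_pow, Real.sq_sqrt hPpos, hch2, hsh2, hen, he2]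
    field_simp
    ring
  set Z := Real.sqrt ((m₁ + m₂ * Real.exp (2 * ψ)) * (m₂ + m₁ * Real.exp (2 * ψ)))
      * Real.exp (-ψ) with hZ
  set A := m₁ + m₂ * Real.cosh (2 * ψ)
  set B := m₂ * Real.sinh (2 * ψ)
  set s := Real.sinh (2 * χ₁)
  set c := Real.cosh (2 * χ₁)
  have hZnn : 0 ≤ Z := by rw [hZ]; positivity
  have hc1 : 1 ≤ c := Real.one_le_cosh _
  have hcs : c ^ 2 - s ^ 2 = 1 := by
    have := Real.cosh_sq_sub_sinh_sq (2 * χ₁); nlinarith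
  have hsq : (Z * c) ^ 2 = A ^ 2 := by
    linear_combination c ^ 2 * hZ2 + (A * s + B * c) * hAs + A ^ 2 * hcs
  have hzero : (Z * c - A) * (Z * c + A) = 0 := by linear_combination hsq
  rcases mul_eq_zero.mp hzero with h | h
  · linarith
  · have hZc : 0 ≤ Z * c := by positivity
    linarith

/-- `det(-m(η + η̄ cosh 2χ)σ₃ + m η̄ sinh(2χ) J) = -2|η|²m²(cos 2θ + cosh 2χ)`
with `θ = arg η`; consequently, for a gravitational relative equilibrium with separation
`ψ` and phase `θ`, the invariant `k₁₁ = det L₁` equals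
`-(m₁²/(2 sinh³ψ cosh ψ))(Z e^{-ψ} cos 2θ + m₁ + m₂ cosh 2ψ)`. -/
theorem det_left_momentum_invariant :
    (∀ (m χ : ℝ), 0 < m → ∀ η : ℂ, η ≠ 0 →
      ((-((m : ℂ) * (η + (starRingEnd ℂ) η * (Real.cosh (2 * χ) : ℂ))))
            • (!![1, 0; 0, -1] : Matrix (Fin 2) (Fin 2) ℂ)
          + ((m : ℂ) * (starRingEnd ℂ) η * (Real.sinh (2 * χ) : ℂ))
            • (!![0, 1; -1, 0] : Matrix (Fin 2) (Fin 2) ℂ)).det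
        = ((-2 * Complex.normSq η * m ^ 2
            * (Real.cos (2 * Complex.arg η) + Real.cosh (2 * χ)) : ℝ) : ℂ))
    ∧ (∀ (m₁ m₂ ψ χ₁ χ₂ : ℝ), 0 < m₁ → 0 < m₂ → 0 < ψ → 0 < χ₁ → 0 < χ₂ →
        χ₁ + χ₂ = ψ → m₁ * Real.sinh (2 * χ₁) = m₂ * Real.sinh (2 * χ₂) →
        ∀ η : ℂ, η ≠ 0 →
        Complex.normSq η
          = Real.sqrt ((m₁ + m₂ * Real.exp (2 * ψ)) * (m₂ + m₁ * Real.exp (2 * ψ)))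
              * Real.exp (-ψ) / (2 * Real.sinh ψ ^ 2 * Real.sinh (2 * ψ)) →
        ((-((m₁ : ℂ) * (η + (starRingEnd ℂ) η * (Real.cosh (2 * χ₁) : ℂ))))
              • (!![1, 0; 0, -1] : Matrix (Fin 2) (Fin 2) ℂ)
            + ((m₁ : ℂ) * (starRingEnd ℂ) η * (Real.sinh (2 * χ₁) : ℂ))
              • (!![0, 1; -1, 0] : Matrix (Fin 2) (Fin 2) ℂ)).det
          = ((-(m₁ ^ 2 / (2 * Real.sinh ψ ^ 3 * Real.cosh ψ))
              * (Real.sqrt ((m₁ + m₂ * Real.exp (2 * ψ)) * (m₂ + m₁ * Real.exp (2 * ψ)))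
                    * Real.exp (-ψ) * Real.cos (2 * Complex.arg η)
                  + m₁ + m₂ * Real.cosh (2 * ψ)) : ℝ) : ℂ)) := by
  constructor
  · exact fun m χ hm η hη => part1_s16 m χ hm η hη
  · intro m₁ m₂ ψ χ₁ χ₂ hm1 hm2 hψ hχ1 hχ2 hsum hbal η hη hN
    rw [part1_s16 m₁ χ₁ hm1 η hη, Complex.ofReal_inj]
    have hZc := cosh_rel m₁ m₂ ψ χ₁ χ₂ hm1 hm2 hψ hsum hbal
    have hs : 0 < Real.sinh ψ := Real.sinh_pos_iff.mpr hψ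
    have hcp : 0 < Real.cosh ψ := Real.cosh_pos ψ
    rw [hN, Real.sinh_two_mul]
    rw [Real.sqrt_mul (by positivity)] at hZc
    field_simp
    rw [Real.sqrt_mul (by positivity)]
    linear_combination (-1) * hZc
end

section
/- Let m₁, m₂ > 0, ψ > 0, and θ ∈ ℝ. Set Z = sqrt((m₁ + m₂ e^{2ψ})(m₂ + m₁ e^{2ψ})), k₁₁ = -(m₁²/(2 sinh³ψ cosh ψ))(Z e^{-ψ} cos 2θ + m₁ + m₂ cosh 2ψ), k₂₂ = -(m₂²/(2 sinh³ψ cosh ψ))(Z e^{-ψ} cos 2θ + m₂ + m₁ cosh 2ψ), and let c₀ = (k₁₁/m₁² - k₂₂/m₂²)² + 2 coth(ψ) csch²(ψ) [ (k₁₁/m₁)(1 + m₂/m₁) + (k₂₂/m₂)(1 + m₁/m₂) ] + [ (m₁ + m₂) coth(ψ) csch²(ψ) ]². Then c₀ = -2 e^{-ψ} Γ(θ, ψ) csch⁶(ψ), where Γ(θ, ψ) = (m₁ + m₂) Z cos 2θ + ((1 + tanh ψ)/(2 cosh ψ)) (m₁ + m₂ cosh 2ψ)(m₂ + m₁ cosh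 2ψ). -/
set_option maxHeartbeats 4000000


/-- the constant term `c₀` of the characteristic polynomial of the
linearisation at a relative equilibrium with separation `ψ` and phase `θ` satisfies
`c₀ = -2 e^{-ψ} Γ(θ,ψ) csch⁶ψ`, where
`Γ(θ,ψ) = (m₁+m₂) Z cos 2θ + ((1+tanh ψ)/(2 cosh ψ))(m₁+m₂ cosh 2ψ)(m₂+m₁ cosh 2ψ)`. -/
theorem constant_term_equals_Gamma (m₁ m₂ ψ θ : ℝ) (hm₁ : 0 < m₁) (hm₂ : 0 < m₂)
    (hψ : 0 < ψ) :
    let Z := Real.sqrt ((m₁ + m₂ * Real.exp (2 * ψ)) * (m₂ + m₁ * Real.exp (2 * ψ)))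
    let k₁₁ := -(m₁ ^ 2 / (2 * Real.sinh ψ ^ 3 * Real.cosh ψ))
        * (Z * Real.exp (-ψ) * Real.cos (2 * θ) + m₁ + m₂ * Real.cosh (2 * ψ))
    let k₂₂ := -(m₂ ^ 2 / (2 * Real.sinh ψ ^ 3 * Real.cosh ψ))
        * (Z * Real.exp (-ψ) * Real.cos (2 * θ) + m₂ + m₁ * Real.cosh (2 * ψ))
    let c₀ := (k₁₁ / m₁ ^ 2 - k₂₂ / m₂ ^ 2) ^ 2
        + 2 * (Real.cosh ψ / Real.sinh ψ) * (1 / Real.sinh ψ) ^ 2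
            * ((k₁₁ / m₁) * (1 + m₂ / m₁) + (k₂₂ / m₂) * (1 + m₁ / m₂))
        + ((m₁ + m₂) * (Real.cosh ψ / Real.sinh ψ) * (1 / Real.sinh ψ) ^ 2) ^ 2
    let Γ := (m₁ + m₂) * Z * Real.cos (2 * θ)
        + ((1 + Real.tanh ψ) / (2 * Real.cosh ψ))
            * (m₁ + m₂ * Real.cosh (2 * ψ)) * (m₂ + m₁ * Real.cosh (2 * ψ))
    c₀ = -2 * Real.exp (-ψ) * Γ * (1 / Real.sinh ψ) ^ 6 := by
  intro Z k₁₁ k₂₂ c₀ Γ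
  have hm₁' := hm₁.ne'
  have hm₂' := hm₂.ne'
  set u := Real.exp ψ with hu
  have hu0 : u ≠ 0 := (Real.exp_pos ψ).ne'
  have hu1 : 1 < u := by simpa [hu] using Real.exp_lt_exp.2 hψ
  have h1 : u ^ 2 - 1 ≠ 0 := by nlinarith
  have h2 : u ^ 2 + 1 ≠ 0 := by nlinarith
  have hsinh : Real.sinh ψ = (u ^ 2 - 1) / (2 * u) := by
    rw [Real.sinh_eq, Real.exp_neg, ← hu]; field_simp
  have hcosh : Real.cosh ψ = (u ^ 2 + 1) / (2 * u) := by
    rw [Real.cosh_eq, Real.exp_neg, ← hu]; field_simp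
  have hexp2 : Real.exp (2 * ψ) = u ^ 2 := by
    rw [two_mul, Real.exp_add, ← hu]; ring
  have hcosh2 : Real.cosh (2 * ψ) = (u ^ 4 + 1) / (2 * u ^ 2) := by
    rw [Real.cosh_eq, Real.exp_neg, hexp2]; field_simp
  have hexpneg : Real.exp (-ψ) = 1 / u := by
    rw [Real.exp_neg, ← hu, one_div]
  have htanh : Real.tanh ψ = (u ^ 2 - 1) / (u ^ 2 + 1) := by
    rw [Real.tanh_eq_sinh_div_cosh, hsinh, hcosh]
    field_simp
  clear_value Z
  simp only [c₀, Γ, k₁₁, k₂₂, hsinh, hcosh, hcosh2, hexpneg, htanh]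
  field_simp
  ring
end

section
/- Let m₁, m₂ > 0, ψ > 0 and θ ∈ ℝ with cos 2θ ≥ 0, and set Z = sqrt((m₁ + m₂ e^{2ψ})(m₂ + m₁ e^{2ψ})) and Γ(θ, ψ) = (m₁ + m₂) Z cos 2θ + ((1 + tanh ψ)/(2 cosh ψ)) (m₁ + m₂ cosh 2ψ)(m₂ + m₁ cosh 2ψ). Then Γ(θ, ψ) > 0. In particular, every relative equilibrium of the gravitational 2-body problem on hyperbolic 3-space with cos 2θ ≥ 0 is nondegenerate (and is linearly unstable). -/
/-- for `cos 2θ ≥ 0` one has `Γ(θ,ψ) > 0`; in particular every relative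
equilibrium of the gravitational 2-body problem on `H³` with `cos 2θ ≥ 0` is
nondegenerate (and linearly unstable). -/
theorem Gamma_pos_of_cos_nonneg (m₁ m₂ ψ θ : ℝ) (hm₁ : 0 < m₁) (hm₂ : 0 < m₂)
    (hψ : 0 < ψ) (hθ : 0 ≤ Real.cos (2 * θ)) :
    0 < (m₁ + m₂)
          * Real.sqrt ((m₁ + m₂ * Real.exp (2 * ψ)) * (m₂ + m₁ * Real.exp (2 * ψ)))
          * Real.cos (2 * θ)
        + ((1 + Real.tanh ψ) / (2 * Real.cosh ψ))
          * (m₁ + m₂ * Real.cosh (2 * ψ)) * (m₂ + m₁ * Real.cosh (2 * ψ)) := by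
  have h1 : 0 ≤ (m₁ + m₂)
      * Real.sqrt ((m₁ + m₂ * Real.exp (2 * ψ)) * (m₂ + m₁ * Real.exp (2 * ψ)))
      * Real.cos (2 * θ) :=
    mul_nonneg (mul_nonneg (by positivity) (Real.sqrt_nonneg _)) hθ
  have h2 : 0 < ((1 + Real.tanh ψ) / (2 * Real.cosh ψ))
      * (m₁ + m₂ * Real.cosh (2 * ψ)) * (m₂ + m₁ * Real.cosh (2 * ψ)) := by
    have hc := Real.cosh_pos ψ
    have hc2 := Real.cosh_pos (2 * ψ)
    have hs : 0 < Real.sinh ψ := Real.sinh_pos_iff.2 hψ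
    have htanh : 0 < Real.tanh ψ := by
      rw [Real.tanh_eq_sinh_div_cosh]; positivity
    have : 0 < 1 + Real.tanh ψ := by linarith
    positivity
  linarith
end

section
/- Let m₁, m₂ > 0, and define Γ(θ, ψ) = (m₁ + m₂) Z cos 2θ + ((1 + tanh ψ)/(2 cosh ψ)) (m₁ + m₂ cosh 2ψ)(m₂ + m₁ cosh 2ψ) with Z = sqrt((m₁ + m₂ e^{2ψ})(m₂ + m₁ e^{2ψ})). Then: (a) there exists ψ_crit > 0 such that Γ(θ, ψ) > 0 for all ψ > ψ_crit and all θ ∈ ℝ; and (b) there exists ψ₀ > 0 such that Γ(θ, ψ) < 0 for all 0 < ψ < ψ₀ and all θ ∈ ℝ with cos 2θ = -1. -/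
set_option maxHeartbeats 1000000 in
private lemma gamma_aux_a (m₁ m₂ : ℝ) (hm₁ : 0 < m₁) (hm₂ : 0 < m₂) :
    ∃ ψcrit : ℝ, 0 < ψcrit ∧ ∀ ψ : ℝ, ψcrit < ψ → ∀ θ : ℝ, 0 <
      (m₁ + m₂)
          * Real.sqrt ((m₁ + m₂ * Real.exp (2 * ψ)) * (m₂ + m₁ * Real.exp (2 * ψ)))
          * Real.cos (2 * θ)
        + ((1 + Real.tanh ψ) / (2 * Real.cosh ψ))
          * (m₁ + m₂ * Real.cosh (2 * ψ)) * (m₂ + m₁ * Real.cosh (2 * ψ)) := by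
  set C : ℝ := 8 * (m₁ + m₂)^2 / (m₁ * m₂) with hC
  have hC1 : 1 < C := by
    rw [hC, lt_div_iff₀ (by positivity)]
    nlinarith [sq_nonneg (m₁ - m₂), sq_nonneg (m₁ + m₂)]
  refine ⟨Real.log C, Real.log_pos hC1, fun ψ hψ θ => ?_⟩
  have hψ0 : 0 < ψ := lt_trans (Real.log_pos hC1) hψ
  have hE : C < Real.exp ψ := by
    calc C = Real.exp (Real.log C) := (Real.exp_log (by linarith)).symm
    _ < Real.exp ψ := Real.exp_lt_exp.2 hψ
  set E := Real.exp ψ with hEdef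
  have hE1 : 1 < E := lt_trans hC1 hE
  have hEpos : 0 < E := by linarith
  have hE2 : Real.exp (2 * ψ) = E ^ 2 := by
    rw [hEdef, ← Real.exp_nat_mul]; norm_num
  have hcosh : Real.cosh ψ = (E + E⁻¹) / 2 := by
    rw [Real.cosh_eq, hEdef, Real.exp_neg]
  have hcosh2 : Real.cosh (2 * ψ) = (E^2 + (E^2)⁻¹) / 2 := by
    rw [Real.cosh_eq, Real.exp_neg, hE2]
  have htanh : 0 ≤ Real.tanh ψ := by
    rw [Real.tanh_eq_sinh_div_cosh]
    exact div_nonneg (Real.sinh_nonneg_iff.2 hψ0.le) (le_of_lt (Real.cosh_pos ψ))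
  have hinv0 : (0:ℝ) ≤ E⁻¹ := by positivity
  have hEinv : E⁻¹ ≤ E := by
    have h : E * E⁻¹ = 1 := mul_inv_cancel₀ (ne_of_gt hEpos)
    nlinarith
  have hcosh_le : Real.cosh ψ ≤ E := by rw [hcosh]; linarith
  have hfrac : 1 / (2 * E) ≤ (1 + Real.tanh ψ) / (2 * Real.cosh ψ) := by
    exact div_le_div₀ (by linarith) (by linarith) (by positivity) (by linarith)
  have hc2 : E ^ 2 / 2 ≤ Real.cosh (2 * ψ) := by
    rw [hcosh2]
    have : (0:ℝ) ≤ (E^2)⁻¹ := by positivity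
    linarith
  have hP : m₁ * m₂ * E ^ 3 / 8 ≤ ((1 + Real.tanh ψ) / (2 * Real.cosh ψ))
      * (m₁ + m₂ * Real.cosh (2 * ψ)) * (m₂ + m₁ * Real.cosh (2 * ψ)) := by
    have h1 : m₂ * E ^ 2 / 2 ≤ m₁ + m₂ * Real.cosh (2 * ψ) := by nlinarith
    have h2 : m₁ * E ^ 2 / 2 ≤ m₂ + m₁ * Real.cosh (2 * ψ) := by nlinarith
    calc m₁ * m₂ * E ^ 3 / 8 = (1 / (2 * E)) * (m₂ * E ^ 2 / 2) * (m₁ * E ^ 2 / 2) := by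
          field_simp; ring
    _ ≤ ((1 + Real.tanh ψ) / (2 * Real.cosh ψ))
      * (m₁ + m₂ * Real.cosh (2 * ψ)) * (m₂ + m₁ * Real.cosh (2 * ψ)) := by
        apply mul_le_mul (mul_le_mul hfrac h1 (by positivity) (by positivity)) h2
          (by positivity) (by positivity)
  have hZ : Real.sqrt ((m₁ + m₂ * Real.exp (2 * ψ)) * (m₂ + m₁ * Real.exp (2 * ψ)))
      ≤ (m₁ + m₂) * E ^ 2 := by
    rw [show (m₁ + m₂) * E ^ 2 = Real.sqrt (((m₁ + m₂) * E ^ 2)^2) by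
      rw [Real.sqrt_sq (by positivity)]]
    apply Real.sqrt_le_sqrt
    rw [hE2]
    have hE2' : (1:ℝ) ≤ E ^ 2 := by nlinarith
    have h4 : E ^ 2 ≤ E ^ 4 := by
      nlinarith [mul_le_mul_of_nonneg_left hE2' (by positivity : (0:ℝ) ≤ E ^ 2)]
    have h5 : (1:ℝ) ≤ E ^ 4 := hE2'.trans h4
    nlinarith [mul_le_mul_of_nonneg_left h4 (by positivity : (0:ℝ) ≤ m₁^2 + m₂^2),
      mul_le_mul_of_nonneg_left h5 (by positivity : (0:ℝ) ≤ m₁ * m₂)]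
  have hcos : -1 ≤ Real.cos (2 * θ) := Real.neg_one_le_cos _
  have hZnn : 0 ≤ Real.sqrt ((m₁ + m₂ * Real.exp (2 * ψ)) * (m₂ + m₁ * Real.exp (2 * ψ))) :=
    Real.sqrt_nonneg _
  have hkey : (m₁ + m₂) * ((m₁ + m₂) * E ^ 2) < m₁ * m₂ * E ^ 3 / 8 := by
    have h6 : 8 * (m₁ + m₂)^2 < m₁ * m₂ * E := by
      rw [hC] at hE
      have := (div_lt_iff₀ (by positivity : (0:ℝ) < m₁ * m₂)).mp hE
      nlinarith
    nlinarith [mul_lt_mul_of_pos_right h6 (by positivity : (0:ℝ) < E ^ 2)]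
  have h7 := mul_le_mul_of_nonneg_left hcos
    (mul_nonneg (by positivity : (0:ℝ) ≤ m₁ + m₂) hZnn)
  have h8 := mul_le_mul_of_nonneg_left hZ (by positivity : (0:ℝ) ≤ m₁ + m₂)
  linarith [hP, hkey, h7, h8]


private lemma gamma_aux_b (m₁ m₂ : ℝ) (hm₁ : 0 < m₁) (hm₂ : 0 < m₂) :
    ∃ ψ₀ : ℝ, 0 < ψ₀ ∧ ∀ ψ : ℝ, 0 < ψ → ψ < ψ₀ →
        ∀ θ : ℝ, Real.cos (2 * θ) = -1 →
      (m₁ + m₂)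
          * Real.sqrt ((m₁ + m₂ * Real.exp (2 * ψ)) * (m₂ + m₁ * Real.exp (2 * ψ)))
          * Real.cos (2 * θ)
        + ((1 + Real.tanh ψ) / (2 * Real.cosh ψ))
          * (m₁ + m₂ * Real.cosh (2 * ψ)) * (m₂ + m₁ * Real.cosh (2 * ψ)) < 0 := by
  set g : ℝ → ℝ := fun ψ =>
      (m₁ + m₂)
          * Real.sqrt ((m₁ + m₂ * Real.exp (2 * ψ)) * (m₂ + m₁ * Real.exp (2 * ψ)))
          * (-1)
        + ((1 + Real.tanh ψ) / (2 * Real.cosh ψ))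
          * (m₁ + m₂ * Real.cosh (2 * ψ)) * (m₂ + m₁ * Real.cosh (2 * ψ)) with hg
  have hct : Continuous Real.tanh := by
    have h : Real.tanh = fun x : ℝ => Real.sinh x / Real.cosh x :=
      funext fun x => Real.tanh_eq_sinh_div_cosh x
    rw [h]
    exact Real.continuous_sinh.div Real.continuous_cosh fun x => (Real.cosh_pos x).ne'
  have hcont : Continuous g := by
    apply Continuous.add
    · fun_prop
    · apply Continuous.mul
      apply Continuous.mul
      · exact (continuous_const.add hct).div
          (by fun_prop) (fun x => by positivity)
      · fun_prop
      · fun_prop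
  have hg0 : g 0 < 0 := by
    have h1 : Real.sqrt ((m₁ + m₂ * Real.exp (2 * 0)) * (m₂ + m₁ * Real.exp (2 * 0)))
        = m₁ + m₂ := by
      norm_num
      rw [show (m₁ + m₂) * (m₂ + m₁) = (m₁ + m₂)^2 by ring, Real.sqrt_sq (by positivity)]
    simp only [hg, h1]
    norm_num [Real.tanh_zero, Real.cosh_zero]
    nlinarith
  have hev : ∀ᶠ ψ in nhds (0:ℝ), g ψ < 0 :=
    (hcont.continuousAt (x := 0)).eventually_lt_const hg0
  rw [Metric.eventually_nhds_iff] at hev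
  obtain ⟨ε, hε, hball⟩ := hev
  refine ⟨ε, hε, fun ψ h0 hψ θ hθ => ?_⟩
  have hgψ : g ψ < 0 := hball (by simp [Real.dist_eq, abs_of_pos h0]; linarith)
  rw [hg] at hgψ
  simp only at hgψ
  rw [hθ]
  exact hgψ

/-- (a) there is a `ψ_crit > 0` beyond which `Γ(θ,ψ) > 0` for all phases
`θ` (instability of widely separated relative equilibria); (b) there is a `ψ₀ > 0` such
that `Γ(θ,ψ) < 0` for all `0 < ψ < ψ₀` and all elliptic phases (`cos 2θ = -1`). -/
theorem Gamma_sign_for_extreme_separations (m₁ m₂ : ℝ) (hm₁ : 0 < m₁) (hm₂ : 0 < m₂) :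
    let Γ : ℝ → ℝ → ℝ := fun θ ψ =>
      (m₁ + m₂)
          * Real.sqrt ((m₁ + m₂ * Real.exp (2 * ψ)) * (m₂ + m₁ * Real.exp (2 * ψ)))
          * Real.cos (2 * θ)
        + ((1 + Real.tanh ψ) / (2 * Real.cosh ψ))
          * (m₁ + m₂ * Real.cosh (2 * ψ)) * (m₂ + m₁ * Real.cosh (2 * ψ))
    (∃ ψcrit : ℝ, 0 < ψcrit ∧ ∀ ψ : ℝ, ψcrit < ψ → ∀ θ : ℝ, 0 < Γ θ ψ)
    ∧ (∃ ψ₀ : ℝ, 0 < ψ₀ ∧ ∀ ψ : ℝ, 0 < ψ → ψ < ψ₀ →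
        ∀ θ : ℝ, Real.cos (2 * θ) = -1 → Γ θ ψ < 0) := by
  intro Γ
  exact ⟨gamma_aux_a m₁ m₂ hm₁ hm₂, gamma_aux_b m₁ m₂ hm₁ hm₂⟩
end
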